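/- Let a_n ≤ a_{n−1} ≤ ⋯ ≤ a_1 ≤ b_1 ≤ b_2 ≤ ⋯ ≤ b_n be real numbers and let p ≥ 1. Then for every permutation σ of {1, …, n}, ∑_{i=1}^n (b_i − a_{σ(i)})^p ≤ ∑_{i=1}^n (b_i − a_i)^p. -/

import Mathlib

open Finset Equiv

/-- Increments of a convex power function are monotone. -/
lemma rpow_incr_mono {p : ℝ} (hp : 1 ≤ p) {x y d : ℝ} (hx : 0 ≤ x) (hxy : x ≤ y)
    (hd : 0 ≤ d) : (x + d) ^ p - x ^ p ≤ (y + d) ^ p - y ^ p := by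
  rcases hd.eq_or_lt with rfl | hd
  · simp
  rcases hxy.eq_or_lt with rfl | hxy
  · exact le_rfl
  have hy : (0:ℝ) ≤ y := hx.trans hxy.le
  have hcv := convexOn_rpow hp
  have hxd : (0:ℝ) ≤ x + d := by linarith
  have hyd : (0:ℝ) ≤ y + d := by linarith
  have h1 := hcv.secant_mono (Set.mem_Ici.mpr hx) (Set.mem_Ici.mpr hxd)
    (Set.mem_Ici.mpr hyd) (by linarith) (by linarith) (by linarith)
  have h2 := hcv.secant_mono (Set.mem_Ici.mpr hyd) (Set.mem_Ici.mpr hx)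
    (Set.mem_Ici.mpr hy) (by linarith) (by linarith) hxy.le
  set A := (x + d) ^ p - x ^ p with hA
  set B := (y + d) ^ p - x ^ p with hB
  set C := (y + d) ^ p - y ^ p with hC
  have e1 : x ^ p - (y + d) ^ p = -B := by rw [hB]; ring
  have e2 : x - (y + d) = -(y + d - x) := by ring
  have e3 : y ^ p - (y + d) ^ p = -C := by rw [hC]; ring
  have e4 : y - (y + d) = -d := by ring
  rw [e1, e2, e3, e4, neg_div_neg_eq, div_neg, neg_div, neg_neg] at h2
  have hD : (0:ℝ) < y + d - x := by linarith
  have h1' : A / d ≤ B / (y + d - x) := by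
    have e : x + d - x = d := by ring
    rwa [e] at h1
  have h2' : B / (y + d - x) ≤ C / d := h2
  rw [div_le_div_iff₀ hd hD] at h1'
  rw [div_le_div_iff₀ hD hd] at h2'
  nlinarith

/-- The extreme pairing dominates for convex powers. -/
lemma pair_rpow_ineq {p : ℝ} (hp : 1 ≤ p) {x1 x2 y1 y2 : ℝ}
    (hx : x1 ≤ x2) (hy : y1 ≤ y2) (h : y2 ≤ x1) :
    (x2 - y2) ^ p + (x1 - y1) ^ p ≤ (x2 - y1) ^ p + (x1 - y2) ^ p := by
  have key := rpow_incr_mono hp (x := x1 - y2) (y := x2 - y2) (d := y2 - y1)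
    (by linarith) (by linarith) (by linarith)
  have e1 : x1 - y2 + (y2 - y1) = x1 - y1 := by ring
  have e2 : x2 - y2 + (y2 - y1) = x2 - y1 := by ring
  rw [e1, e2] at key
  linarith

/-- **rearrangement inequality for `p`-th powers.**
Given real numbers `a n ≤ ⋯ ≤ a 1 ≤ b 1 ≤ ⋯ ≤ b n` (encoded by `a` antitone, `b` monotone,
and every `a i` at most every `b j`) and `p ≥ 1`, every bijective pairing `σ` of the `b`'s
with the `a`'s satisfies `∑ i, (b i − a (σ i))^p ≤ ∑ i, (b i − a i)^p`. -/
theorem rearrangement_rpow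
    (n : ℕ) (a b : Fin n → ℝ)
    (ha : Antitone a) (hb : Monotone b) (hab : ∀ i j, a i ≤ b j)
    (p : ℝ) (hp : 1 ≤ p)
    (σ : Equiv.Perm (Fin n)) :
    ∑ i, (b i - a (σ i)) ^ p ≤ ∑ i, (b i - a i) ^ p := by
  suffices H : ∀ N (σ : Equiv.Perm (Fin n)), σ.support.card ≤ N →
      ∑ i, (b i - a (σ i)) ^ p ≤ ∑ i, (b i - a i) ^ p from H _ σ le_rfl
  intro N
  induction N with
  | zero =>
    intro σ hσ
    have : σ = 1 := by
      rw [← Equiv.Perm.card_support_eq_zero]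
      omega
    subst this
    simp
  | succ N ih =>
    intro σ hσ
    by_cases h1 : σ = 1
    · subst h1; simp
    have hne : σ.support.Nonempty := by
      rw [Finset.nonempty_iff_ne_empty, Ne, Equiv.Perm.support_eq_empty_iff]
      exact h1
    set i0 := σ.support.max' hne with hi0
    have hi0mem : i0 ∈ σ.support := σ.support.max'_mem hne
    have hi : σ i0 ≠ i0 := Equiv.Perm.mem_support.mp hi0mem
    set j := σ⁻¹ i0 with hj
    have hji0 : σ j = i0 := σ.apply_symm_apply i0
    have hjne : j ≠ i0 := by
      intro h
      exact hi (by rw [← h, hji0, h])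
    have hjsup : j ∈ σ.support := Equiv.Perm.mem_support.mpr (by rw [hji0]; exact hjne.symm)
    have hjlt : j < i0 := lt_of_le_of_ne (σ.support.le_max' j hjsup) hjne
    have hksup : σ i0 ∈ σ.support := Equiv.Perm.apply_mem_support.mpr hi0mem
    have hklt : σ i0 < i0 := lt_of_le_of_ne (σ.support.le_max' _ hksup) hi
    set σ' := σ * Equiv.swap j i0 with hσ'
    have hσ'i0 : σ' i0 = i0 := by
      rw [hσ', Equiv.Perm.mul_apply, Equiv.swap_apply_right, hji0]
    have hσ'j : σ' j = σ i0 := by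
      rw [hσ', Equiv.Perm.mul_apply, Equiv.swap_apply_left]
    have hσ'x : ∀ x, x ≠ j → x ≠ i0 → σ' x = σ x := by
      intro x hxj hxi
      rw [hσ', Equiv.Perm.mul_apply, Equiv.swap_apply_of_ne_of_ne hxj hxi]
    have hsub : σ'.support ⊆ σ.support.erase i0 := by
      intro x hx
      rw [Equiv.Perm.mem_support] at hx
      have hxi : x ≠ i0 := by
        intro h; subst h; exact hx hσ'i0
      refine Finset.mem_erase.mpr ⟨hxi, Equiv.Perm.mem_support.mpr ?_⟩
      by_cases hxj : x = j
      · subst hxj; rw [hji0]; exact hjne.symm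
      · rw [← hσ'x x hxj hxi]; exact hx
    have hcard : σ'.support.card ≤ N := by
      have h1 := Finset.card_le_card hsub
      have h2 := Finset.card_erase_of_mem hi0mem
      omega
    have IH := ih σ' hcard
    have hsplit : ∀ c : Fin n → ℝ,
        ∑ x, c x = ∑ x ∈ (Finset.univ.erase i0).erase j, c x + c j + c i0 := by
      intro c
      rw [Finset.sum_erase_add _ _ (Finset.mem_erase.mpr ⟨hjne, Finset.mem_univ j⟩),
        Finset.sum_erase_add _ _ (Finset.mem_univ i0)]
    have hSeq : ∑ x ∈ (Finset.univ.erase i0).erase j, (b x - a (σ x)) ^ p =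
        ∑ x ∈ (Finset.univ.erase i0).erase j, (b x - a (σ' x)) ^ p := by
      refine Finset.sum_congr rfl fun x hx => ?_
      rw [Finset.mem_erase, Finset.mem_erase] at hx
      rw [hσ'x x hx.1 hx.2.1]
    have hpair : (b j - a (σ j)) ^ p + (b i0 - a (σ i0)) ^ p ≤
        (b j - a (σ' j)) ^ p + (b i0 - a (σ' i0)) ^ p := by
      rw [hji0, hσ'j, hσ'i0]
      have := pair_rpow_ineq hp (x1 := b j) (x2 := b i0) (y1 := a i0) (y2 := a (σ i0))
        (hb hjlt.le) (ha hklt.le) (hab _ _)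
      linarith
    calc ∑ x, (b x - a (σ x)) ^ p
        = ∑ x ∈ (Finset.univ.erase i0).erase j, (b x - a (σ x)) ^ p
            + (b j - a (σ j)) ^ p + (b i0 - a (σ i0)) ^ p := hsplit _
      _ ≤ ∑ x ∈ (Finset.univ.erase i0).erase j, (b x - a (σ' x)) ^ p
            + (b j - a (σ' j)) ^ p + (b i0 - a (σ' i0)) ^ p := by
          rw [hSeq]; linarith
      _ = ∑ x, (b x - a (σ' x)) ^ p := (hsplit _).symm
      _ ≤ ∑ x, (b x - a x) ^ p := IH
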